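/- Let ω be a primitive third root of unity and a_n = sum over p+q+r=n of ω^(p-q) * (n!/(p!q!r!))^2. Then a_n = 0 whenever n is not divisible by 3. -/

import Mathlib

lemma multinomial_rot (p q r : ℕ) :
    Nat.multinomial Finset.univ ![r, p, q] = Nat.multinomial Finset.univ ![p, q, r] := by
  simp only [Nat.multinomial, Fin.sum_univ_three, Fin.prod_univ_three]
  simp [Matrix.cons_val_zero, Matrix.cons_val_one]
  ring_nf

theorem omega_vanishing (ω : ℂ) (hω3 : ω ^ 3 = 1) (hω1 : ω ≠ 1) (f : ℕ → ℂ)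
    (hf : ∀ n : ℕ, f n = ∑ x ∈ Finset.HasAntidiagonal.antidiagonal n, ∑ y ∈ Finset.HasAntidiagonal.antidiagonal x.2,
      ω ^ x.1 * (ω ^ 2) ^ y.1 *
        ((Nat.multinomial Finset.univ ![x.1, y.1, y.2] : ℂ)) ^ 2) :
    ∀ n : ℕ, ¬ (3 ∣ n) → f n = 0 := by
  intro n hn
  have hmod : ω ^ n = ω ^ (n % 3) := by
    conv_lhs => rw [← Nat.mod_add_div n 3, pow_add, pow_mul, hω3, one_pow, mul_one]
  have hωn : ω ^ n ≠ 1 := by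
    intro h
    rw [hmod] at h
    have hm : n % 3 = 1 ∨ n % 3 = 2 := by omega
    rcases hm with h1 | h2
    · rw [h1, pow_one] at h; exact hω1 h
    · rw [h2] at h
      apply hω1
      have h3 : ω ^ 2 * ω = ω ^ 3 := by ring
      rw [h, one_mul] at h3
      exact h3.symm ▸ hω3 ▸ rfl
  have key : ω ^ n * f n = f n := by
    rw [hf n]
    rw [Finset.mul_sum]
    simp_rw [Finset.mul_sum]
    rw [Finset.sum_sigma', Finset.sum_sigma']
    refine Finset.sum_nbij' (fun z => ⟨(z.2.2, z.1.1 + z.2.1), (z.1.1, z.2.1)⟩)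
      (fun z => ⟨(z.2.1, z.2.2 + z.1.1), (z.2.2, z.1.1)⟩) ?_ ?_ ?_ ?_ ?_
    · rintro ⟨⟨p, s⟩, q, r⟩ hz
      simp only [Finset.mem_sigma, Finset.HasAntidiagonal.mem_antidiagonal] at hz ⊢
      exact ⟨by omega, trivial⟩
    · rintro ⟨⟨r, t⟩, p, q⟩ hz
      simp only [Finset.mem_sigma, Finset.HasAntidiagonal.mem_antidiagonal] at hz ⊢
      exact ⟨by omega, trivial⟩
    · rintro ⟨⟨p, s⟩, q, r⟩ hz
      simp only [Finset.mem_sigma, Finset.HasAntidiagonal.mem_antidiagonal] at hz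
      obtain ⟨h1, h2⟩ := hz
      subst h2
      rfl
    · rintro ⟨⟨r, t⟩, p, q⟩ hz
      simp only [Finset.mem_sigma, Finset.HasAntidiagonal.mem_antidiagonal] at hz
      obtain ⟨h1, h2⟩ := hz
      subst h2
      rfl
    · rintro ⟨⟨p, s⟩, q, r⟩ hz
      simp only [Finset.mem_sigma, Finset.HasAntidiagonal.mem_antidiagonal] at hz
      obtain ⟨h1, h2⟩ := hz
      simp only
      have h3q : ω ^ (3 * q) = 1 := by rw [pow_mul, hω3, one_pow]
      have hpow : ω ^ n * ω ^ p * (ω ^ 2) ^ q = ω ^ r * (ω ^ 2) ^ p := by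
        calc ω ^ n * ω ^ p * (ω ^ 2) ^ q = ω ^ (n + p + 2 * q) := by
              rw [pow_add, pow_add, pow_mul]
          _ = ω ^ (r + 2 * p + 3 * q) := by congr 1; omega
          _ = ω ^ (r + 2 * p) * ω ^ (3 * q) := by rw [pow_add]
          _ = ω ^ r * (ω ^ 2) ^ p := by rw [h3q, mul_one, pow_add, pow_mul]
      rw [← mul_assoc, ← mul_assoc, hpow, multinomial_rot p q r]
  have hz : (ω ^ n - 1) * f n = 0 := by
    rw [sub_mul, one_mul, key, sub_self]
  rcases mul_eq_zero.mp hz with h | h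
  · exact absurd (by linear_combination h) hωn
  · exact h
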